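/- Let S and A be nonempty types, r̃ : S × A → ℝ a bounded reward function, T : S × A → S, T̂ : S × A → Set S with T̂(s,a) nonempty for all (s,a), and γ ∈ [0,1). Assume T̂ is calibrated, i.e., T(s,a) ∈ T̂(s,a) for all (s,a). Then for any bounded Q₀ : S × A → ℝ and every natural number k, the k-fold iterates satisfy (B̲)ᵏQ₀(s,a) ≤ (B̃)ᵏQ₀(s,a) for all (s,a). -/
import Mathlib


/-- The Bellmin operator: `(B̲Q)(s,a) = r̃(s,a) + γ · inf_{s' ∈ T̂(s,a)} sup_{a' ∈ A} Q(s',a')`. -/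
noncomputable def bellmin {S A : Type*} (rt : S × A → ℝ) (That : S × A → Set S)
    (γ : ℝ) (Q : S × A → ℝ) : S × A → ℝ :=
  fun p => rt p + γ * ⨅ s' : That p, ⨆ a' : A, Q (s'.1, a')

/-- The Bellman operator with true dynamics:
`(B̃Q)(s,a) = r̃(s,a) + γ · sup_{a' ∈ A} Q(T(s,a),a')`. -/
noncomputable def bellman {S A : Type*} (rt : S × A → ℝ) (T : S × A → S)
    (γ : ℝ) (Q : S × A → ℝ) : S × A → ℝ :=
  fun p => rt p + γ * ⨆ a' : A, Q (T p, a')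

section Aux

variable {S A : Type*} [Nonempty A]

lemma abs_ciSup_le {g : A → ℝ} {C : ℝ} (hg : ∀ a, |g a| ≤ C) :
    |⨆ a, g a| ≤ C := by
  have hbdd : BddAbove (Set.range g) := ⟨C, by rintro _ ⟨a, rfl⟩; exact (abs_le.1 (hg a)).2⟩
  rw [abs_le]
  constructor
  · exact le_trans (abs_le.1 (hg Classical.ofNonempty)).1 (le_ciSup hbdd _)
  · exact ciSup_le fun a => (abs_le.1 (hg a)).2

lemma abs_bellmin_le (rt : S × A → ℝ) (R : ℝ) (hr : ∀ p, |rt p| ≤ R)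
    (That : S × A → Set S) (hT : ∀ p, (That p).Nonempty)
    (γ : ℝ) (hγ0 : 0 ≤ γ) {Q : S × A → ℝ} {C : ℝ} (hQ : ∀ p, |Q p| ≤ C)
    (p : S × A) : |bellmin rt That γ Q p| ≤ R + γ * C := by
  have hne : Nonempty (That p) := (hT p).to_subtype
  have habs : ∀ s' : That p, |⨆ a' : A, Q (s'.1, a')| ≤ C :=
    fun s' => abs_ciSup_le (fun a' => hQ _)
  have hinf : |⨅ s' : That p, ⨆ a' : A, Q (s'.1, a')| ≤ C := by
    have hbdd : BddBelow (Set.range fun s' : That p => ⨆ a' : A, Q (s'.1, a')) :=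
      ⟨-C, by rintro _ ⟨s', rfl⟩; exact (abs_le.1 (habs s')).1⟩
    rw [abs_le]
    refine ⟨le_ciInf fun s' => (abs_le.1 (habs s')).1, ?_⟩
    exact le_trans (ciInf_le hbdd Classical.ofNonempty) (abs_le.1 (habs _)).2
  calc |bellmin rt That γ Q p| ≤ |rt p| + |γ * ⨅ s' : That p, ⨆ a' : A, Q (s'.1, a')| :=
        abs_add_le _ _
    _ ≤ R + γ * C := by
        refine add_le_add (hr p) ?_
        rw [abs_mul, abs_of_nonneg hγ0]
        exact mul_le_mul_of_nonneg_left hinf hγ0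

lemma abs_bellman_le (rt : S × A → ℝ) (R : ℝ) (hr : ∀ p, |rt p| ≤ R)
    (T : S × A → S)
    (γ : ℝ) (hγ0 : 0 ≤ γ) {Q : S × A → ℝ} {C : ℝ} (hQ : ∀ p, |Q p| ≤ C)
    (p : S × A) : |bellman rt T γ Q p| ≤ R + γ * C := by
  have hsup : |⨆ a' : A, Q (T p, a')| ≤ C := abs_ciSup_le (fun a' => hQ _)
  calc |bellman rt T γ Q p| ≤ |rt p| + |γ * ⨆ a' : A, Q (T p, a')| := abs_add_le _ _
    _ ≤ R + γ * C := by
        refine add_le_add (hr p) ?_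
        rw [abs_mul, abs_of_nonneg hγ0]
        exact mul_le_mul_of_nonneg_left hsup hγ0

lemma bellmin_le_bellman (rt : S × A → ℝ)
    (T : S × A → S) (That : S × A → Set S)
    (γ : ℝ) (hγ0 : 0 ≤ γ) (hcal : ∀ p, T p ∈ That p)
    {Q Q' : S × A → ℝ} {C : ℝ} (hQ : ∀ p, |Q p| ≤ C) (hQ' : ∀ p, |Q' p| ≤ C)
    (hle : ∀ p, Q p ≤ Q' p)
    (p : S × A) : bellmin rt That γ Q p ≤ bellman rt T γ Q' p := by
  have habs : ∀ s' : That p, |⨆ a' : A, Q (s'.1, a')| ≤ C :=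
    fun s' => abs_ciSup_le (fun a' => hQ _)
  have hbdd : BddBelow (Set.range fun s' : That p => ⨆ a' : A, Q (s'.1, a')) :=
    ⟨-C, by rintro _ ⟨s', rfl⟩; exact (abs_le.1 (habs s')).1⟩
  have h1 : (⨅ s' : That p, ⨆ a' : A, Q (s'.1, a')) ≤ ⨆ a' : A, Q (T p, a') :=
    ciInf_le hbdd (⟨T p, hcal p⟩ : That p)
  have h2 : (⨆ a' : A, Q (T p, a')) ≤ ⨆ a' : A, Q' (T p, a') := by
    refine ciSup_mono ?_ fun a' => hle _
    exact ⟨C, by rintro _ ⟨a', rfl⟩; exact (abs_le.1 (hQ' _)).2⟩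
  exact add_le_add le_rfl (mul_le_mul_of_nonneg_left (h1.trans h2) hγ0)

end Aux

/-- If `T̂` is calibrated, then every `k`-fold iterate of the Bellmin operator applied to a
bounded `Q₀` is pointwise at most the corresponding iterate of the Bellman operator. -/
theorem bellmin_iterate_le_bellman_iterate {S A : Type*} [Nonempty S] [Nonempty A]
    (rt : S × A → ℝ) (R : ℝ) (hr : ∀ p, |rt p| ≤ R)
    (T : S × A → S) (That : S × A → Set S)
    (hT : ∀ p, (That p).Nonempty)
    (γ : ℝ) (hγ0 : 0 ≤ γ) (hγ1 : γ < 1)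
    (hcal : ∀ p, T p ∈ That p)
    (Q₀ : S × A → ℝ) (M : ℝ) (hQ₀ : ∀ p, |Q₀ p| ≤ M) :
    ∀ (k : ℕ) (p : S × A),
      (bellmin rt That γ)^[k] Q₀ p ≤ (bellman rt T γ)^[k] Q₀ p := by
  have key : ∀ k : ℕ, ∃ C : ℝ,
      (∀ p, |(bellmin rt That γ)^[k] Q₀ p| ≤ C) ∧
      (∀ p, |(bellman rt T γ)^[k] Q₀ p| ≤ C) ∧
      (∀ p, (bellmin rt That γ)^[k] Q₀ p ≤ (bellman rt T γ)^[k] Q₀ p) := by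
    intro k
    induction k with
    | zero => exact ⟨M, hQ₀, hQ₀, fun p => le_rfl⟩
    | succ n ih =>
      obtain ⟨C, h1, h2, h3⟩ := ih
      refine ⟨R + γ * C, ?_, ?_, ?_⟩ <;> intro p <;>
        rw [Function.iterate_succ_apply']
      · exact abs_bellmin_le rt R hr That hT γ hγ0 h1 p
      · exact abs_bellman_le rt R hr T γ hγ0 h2 p
      · rw [Function.iterate_succ_apply']
        exact bellmin_le_bellman rt T That γ hγ0 hcal h1 h2 h3 p
  intro k p
  obtain ⟨C, _, _, h3⟩ := key k
  exact h3 p
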